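/- arXiv:1601.07879 — 2 statements merged into one kernel-verified Lean document; each statement's English description precedes it below -/
import Mathlib

section
/- Let m ≥ 1, 0 < θ < 1, γ > 1, and let A, D be invertible m×m real matrices and B, C be m×m real matrices with ‖A^{-1}‖ ≤ 1/(θγ) and ‖B‖ + ‖C‖ + ‖D^{-1}‖ ≤ 1/θ. Then there exist constants γ̄(m) > 1 and K(m) > 1 depending only on m such that if γ ≥ γ̄(m)/θ⁴, the block matrix M = [[A, B], [C, D]] is invertible, and writing M^{-1} − [[A^{-1}, 0], [0, D^{-1}]] = [[E₁₁, E₁₂], [E₁₂^T, E₂₂]] one has ‖E₁₁‖ ≤ K(m)/(θ⁵γ²), ‖E₁₂‖ ≤ K(m)/(θ³γ), and ‖E₂₂‖ ≤ K(m)/(θ⁵γ). -/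
open Matrix

/-- Frobenius norm of a square real matrix. -/
noncomputable def frob {m : ℕ} (M : Matrix (Fin m) (Fin m) ℝ) : ℝ :=
  Real.sqrt (∑ i, ∑ j, (M i j) ^ 2)

section FrobAux

attribute [local instance] Matrix.frobeniusNormedAddCommGroup Matrix.frobeniusNormedSpace
  Matrix.frobeniusNormedRing Matrix.frobeniusNormedAlgebra

lemma frob_eq_norm {m : ℕ} (M : Matrix (Fin m) (Fin m) ℝ) : frob M = ‖M‖ := by
  rw [frob, Matrix.frobenius_norm_def, Real.sqrt_eq_rpow]
  congr 1
  refine Finset.sum_congr rfl fun i _ => Finset.sum_congr rfl fun j _ => ?_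
  rw [Real.norm_eq_abs, show (2:ℝ) = ((2:ℕ):ℝ) by norm_num, Real.rpow_natCast, sq_abs]

theorem stmt_3 (m : ℕ) (hm : 1 ≤ m) :
    ∃ γbar K : ℝ, 1 < γbar ∧ 1 < K ∧
      ∀ (θ γ : ℝ) (A B C D : Matrix (Fin m) (Fin m) ℝ),
        0 < θ → θ < 1 → 1 < γ → IsUnit A → IsUnit D →
        frob A⁻¹ ≤ 1 / (θ * γ) → frob B + frob C + frob D⁻¹ ≤ 1 / θ →
        γbar / θ ^ 4 ≤ γ →
        IsUnit (Matrix.fromBlocks A B C D) ∧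
        frob ((Matrix.fromBlocks A B C D)⁻¹.toBlocks₁₁ - A⁻¹) ≤ K / (θ ^ 5 * γ ^ 2) ∧
        frob ((Matrix.fromBlocks A B C D)⁻¹.toBlocks₁₂) ≤ K / (θ ^ 3 * γ) ∧
        frob ((Matrix.fromBlocks A B C D)⁻¹.toBlocks₂₂ - D⁻¹) ≤ K / (θ ^ 5 * γ) := by
  classical
  refine ⟨2, frob (1 : Matrix (Fin m) (Fin m) ℝ) + 2, one_lt_two, ?_, ?_⟩
  · have h0 : 0 ≤ frob (1 : Matrix (Fin m) (Fin m) ℝ) := Real.sqrt_nonneg _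
    linarith
  intro θ γ A B C D hθ hθ1 hγ hA hD hAinv hsum hγbar
  simp only [frob_eq_norm] at hAinv hsum ⊢
  set n1 : ℝ := ‖(1 : Matrix (Fin m) (Fin m) ℝ)‖ with hn1
  have hθ4 : (0:ℝ) < θ ^ 4 := by positivity
  have hγ0 : (0:ℝ) < γ := lt_trans one_pos hγ
  have hθγ : (0:ℝ) < θ * γ := by positivity
  have key : ∀ (P Q : Matrix (Fin m) (Fin m) ℝ) (p q : ℝ),
      ‖P‖ ≤ p → ‖Q‖ ≤ q → ‖P * Q‖ ≤ p * q := fun P Q p q hp hq =>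
    (norm_mul_le P Q).trans (mul_le_mul hp hq (norm_nonneg _) ((norm_nonneg _).trans hp))
  have ha : ‖A⁻¹‖ ≤ 1 / (θ * γ) := hAinv
  have hb : ‖B‖ ≤ 1 / θ := by linarith [norm_nonneg C, norm_nonneg D⁻¹]
  have hc : ‖C‖ ≤ 1 / θ := by linarith [norm_nonneg B, norm_nonneg D⁻¹]
  have hd : ‖D⁻¹‖ ≤ 1 / θ := by linarith [norm_nonneg B, norm_nonneg C]
  set X : Matrix (Fin m) (Fin m) ℝ := D⁻¹ * (C * (A⁻¹ * B)) with hXdef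
  have hX : ‖X‖ ≤ 1 / θ * (1 / θ * (1 / (θ * γ) * (1 / θ))) :=
    key _ _ _ _ hd (key _ _ _ _ hc (key _ _ _ _ ha hb))
  have hXval : 1 / θ * (1 / θ * (1 / (θ * γ) * (1 / θ))) = 1 / (θ ^ 4 * γ) := by
    field_simp
  have hX' : ‖X‖ ≤ 1 / (θ ^ 4 * γ) := hXval ▸ hX
  have h2le : 2 ≤ θ ^ 4 * γ := by
    have := (div_le_iff₀ hθ4).mp hγbar; linarith
  have hXhalf : ‖X‖ ≤ 1 / 2 := hX'.trans (one_div_le_one_div_of_le two_pos h2le)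
  have hX1 : ‖X‖ < 1 := lt_of_le_of_lt hXhalf (by norm_num)
  set Y : Matrix (Fin m) (Fin m) ℝ := ∑' n : ℕ, X ^ n with hYdef
  have hY1 : Y * (1 - X) = 1 := geom_series_mul_neg X hX1
  have hY2 : (1 - X) * Y = 1 := mul_neg_geom_series X hX1
  have hYnorm : ‖Y‖ ≤ n1 + 1 := by
    have h1 := tsum_geometric_le_of_norm_lt_one X hX1
    have h0 : (1:ℝ) / 2 ≤ 1 - ‖X‖ := by linarith
    have hinv2 : (1 - ‖X‖)⁻¹ ≤ 2 := by
      calc (1 - ‖X‖)⁻¹ ≤ ((1:ℝ)/2)⁻¹ := by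
            exact inv_anti₀ (by norm_num) h0
        _ = 2 := by norm_num
    calc ‖Y‖ ≤ ‖(1 : Matrix (Fin m) (Fin m) ℝ)‖ - 1 + (1 - ‖X‖)⁻¹ := h1
      _ ≤ n1 + 1 := by rw [← hn1]; linarith
  have hDdet : IsUnit D.det := (Matrix.isUnit_iff_isUnit_det D).mp hD
  have hDD : D * D⁻¹ = 1 := Matrix.mul_nonsing_inv D hDdet
  set S : Matrix (Fin m) (Fin m) ℝ := D - C * A⁻¹ * B with hSdef
  have hDX : D * X = C * A⁻¹ * B := by
    rw [hXdef, ← Matrix.mul_assoc, hDD, Matrix.one_mul, ← Matrix.mul_assoc]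
  have hS_eq : S = D * (1 - X) := by
    rw [Matrix.mul_sub, Matrix.mul_one, hDX]
  have h1X : IsUnit (1 - X) := isUnit_one_sub_of_norm_lt_one hX1
  have hSunit : IsUnit S := hS_eq ▸ hD.mul h1X
  have h1Xinv : (1 - X)⁻¹ = Y := inv_eq_right_inv hY2
  have hSinv_eq : S⁻¹ = Y * D⁻¹ := by
    rw [hS_eq, Matrix.mul_inv_rev, h1Xinv]
  have hSinv_norm : ‖S⁻¹‖ ≤ (n1 + 1) * (1 / θ) :=
    hSinv_eq ▸ key _ _ _ _ hYnorm hd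
  obtain ⟨iA⟩ := hA.nonempty_invertible
  have hiA : (⅟A : Matrix (Fin m) (Fin m) ℝ) = A⁻¹ := invOf_eq_nonsing_inv A
  have iS' : Invertible (D - C * ⅟A * B) := by
    rw [hiA]; exact hSunit.nonempty_invertible.some
  have iM : Invertible (Matrix.fromBlocks A B C D) := Matrix.fromBlocks₁₁Invertible A B C D
  have hiS : (⅟(D - C * ⅟A * B) : Matrix (Fin m) (Fin m) ℝ) = S⁻¹ := by
    rw [invOf_eq_nonsing_inv, hiA]
  have hMinv : (Matrix.fromBlocks A B C D)⁻¹ =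
      Matrix.fromBlocks (A⁻¹ + A⁻¹ * B * S⁻¹ * C * A⁻¹) (-(A⁻¹ * B * S⁻¹))
        (-(S⁻¹ * C * A⁻¹)) (S⁻¹) := by
    rw [← invOf_eq_nonsing_inv, Matrix.invOf_fromBlocks₁₁_eq, hiS, hiA]
  have hY_sub : Y - 1 = Y * X := by
    calc Y - 1 = Y - Y * (1 - X) := by rw [hY1]
      _ = Y * X := by rw [Matrix.mul_sub, Matrix.mul_one, sub_sub_cancel]
  have hE22 : S⁻¹ - D⁻¹ = Y * X * D⁻¹ := by
    rw [hSinv_eq, ← hY_sub, Matrix.sub_mul, Matrix.one_mul]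
  refine ⟨isUnit_of_invertible _, ?_, ?_, ?_⟩
  · -- E₁₁
    have hb1 : ‖A⁻¹ * B * S⁻¹ * C * A⁻¹‖ ≤
        1 / (θ * γ) * (1 / θ) * ((n1 + 1) * (1 / θ)) * (1 / θ) * (1 / (θ * γ)) :=
      key _ _ _ _ (key _ _ _ _ (key _ _ _ _ (key _ _ _ _ ha hb) hSinv_norm) hc) ha
    have heq : (Matrix.fromBlocks A B C D)⁻¹.toBlocks₁₁ - A⁻¹ = A⁻¹ * B * S⁻¹ * C * A⁻¹ := by
      rw [hMinv, Matrix.toBlocks_fromBlocks₁₁, add_sub_cancel_left]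
    rw [heq]
    refine hb1.trans ?_
    have hval : 1 / (θ * γ) * (1 / θ) * ((n1 + 1) * (1 / θ)) * (1 / θ) * (1 / (θ * γ))
        = (n1 + 1) / (θ ^ 5 * γ ^ 2) := by
      rw [eq_div_iff (by positivity)]; field_simp
    rw [hval]
    exact div_le_div_of_nonneg_right (by linarith) (by positivity)
  · -- E₁₂
    have hb2 : ‖A⁻¹ * B * S⁻¹‖ ≤ 1 / (θ * γ) * (1 / θ) * ((n1 + 1) * (1 / θ)) :=
      key _ _ _ _ (key _ _ _ _ ha hb) hSinv_norm
    have heq : (Matrix.fromBlocks A B C D)⁻¹.toBlocks₁₂ = -(A⁻¹ * B * S⁻¹) := by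
      rw [hMinv, Matrix.toBlocks_fromBlocks₁₂]
    rw [heq, norm_neg]
    refine hb2.trans ?_
    have hval : 1 / (θ * γ) * (1 / θ) * ((n1 + 1) * (1 / θ)) = (n1 + 1) / (θ ^ 3 * γ) := by
      rw [eq_div_iff (by positivity)]; field_simp
    rw [hval]
    exact div_le_div_of_nonneg_right (by linarith) (by positivity)
  · -- E₂₂
    have hb3 : ‖Y * X * D⁻¹‖ ≤ (n1 + 1) * (1 / (θ ^ 4 * γ)) * (1 / θ) :=
      key _ _ _ _ (key _ _ _ _ hYnorm hX') hd
    have heq : (Matrix.fromBlocks A B C D)⁻¹.toBlocks₂₂ - D⁻¹ = Y * X * D⁻¹ := by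
      rw [hMinv, Matrix.toBlocks_fromBlocks₂₂, hE22]
    rw [heq]
    refine hb3.trans ?_
    have hval : (n1 + 1) * (1 / (θ ^ 4 * γ)) * (1 / θ) = (n1 + 1) / (θ ^ 5 * γ) := by
      rw [eq_div_iff (by positivity)]; field_simp
    rw [hval]
    exact div_le_div_of_nonneg_right (by linarith) (by positivity)

end FrobAux
end

section
/- Define ū(x', x₃) = (x₃ − h₂(x') + ε/2)/(ε + h₁(x') − h₂(x')) on the narrow region Ω_R = {|x'| < R, −ε/2 + h₂(x') < x₃ < ε/2 + h₁(x')} with h₁, h₂ as above (in particular C^{2} with the relative convexity h₁ − h₂ ≥ κ₀|x'|²). Then for k, l = 1, 2: |∂_{x_k x_l} ū(x)| ≤ C/(ε + |x'|²), |∂_{x_k x₃} ū(x)| ≤ C|x'|/(ε + |x'|²)², and ∂_{x₃ x₃} ū(x) = 0, for all x ∈ Ω_R, with C independent of ε. -/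
open Metric ContinuousLinearMap Filter Topology


private lemma mul_abs_le {x X y Y : ℝ} (hx : |x| ≤ X) (hy : |y| ≤ Y) : |x * y| ≤ X * Y := by
  rw [abs_mul]
  exact mul_le_mul hx hy (abs_nonneg _) ((abs_nonneg x).trans hx)

private lemma abs_sub_le' {x X y Y : ℝ} (hx : |x| ≤ X) (hy : |y| ≤ Y) : |x - y| ≤ X + Y := by
  rw [sub_eq_add_neg]
  refine (abs_add_le _ _).trans ?_
  rw [abs_neg]
  exact add_le_add hx hy

private lemma abs_le_self_of_nonneg {x : ℝ} (hx : 0 ≤ x) : |x| ≤ x := le_of_eq (abs_of_nonneg hx)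

/-- The auxiliary function ū on the narrow region, as a function of (x', x₃). -/
noncomputable def ubar (ε : ℝ) (h₁ h₂ : EuclideanSpace ℝ (Fin 2) → ℝ)
    (p : EuclideanSpace ℝ (Fin 2) × ℝ) : ℝ :=
  (p.2 - h₂ p.1 + ε / 2) / (ε + h₁ p.1 - h₂ p.1)

set_option maxHeartbeats 2000000 in
theorem stmt_18 (κ₀ C₁ : ℝ) (hκ : 0 < κ₀) (hC₁ : 0 < C₁) :
    ∃ C : ℝ, 0 < C ∧
      ∀ (ε R : ℝ) (h₁ h₂ : EuclideanSpace ℝ (Fin 2) → ℝ),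
        0 < ε → 0 < R →
        ContDiffOn ℝ 2 h₁ (Metric.ball 0 R) → ContDiffOn ℝ 2 h₂ (Metric.ball 0 R) →
        h₁ 0 = 0 → h₂ 0 = 0 → fderiv ℝ h₁ 0 = 0 → fderiv ℝ h₂ 0 = 0 →
        (∀ y ∈ Metric.ball (0 : EuclideanSpace ℝ (Fin 2)) R,
          |h₁ y| + ‖fderiv ℝ h₁ y‖ + ‖fderiv ℝ (fderiv ℝ h₁) y‖ ≤ C₁ ∧
          |h₂ y| + ‖fderiv ℝ h₂ y‖ + ‖fderiv ℝ (fderiv ℝ h₂) y‖ ≤ C₁) →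
        (∀ y ∈ Metric.ball (0 : EuclideanSpace ℝ (Fin 2)) R,
          κ₀ * ‖y‖ ^ 2 ≤ h₁ y - h₂ y) →
        ∀ (y : EuclideanSpace ℝ (Fin 2)) (t : ℝ),
          y ∈ Metric.ball (0 : EuclideanSpace ℝ (Fin 2)) R →
          -ε / 2 + h₂ y < t → t < ε / 2 + h₁ y →
          (∀ k l : Fin 2,
            |fderiv ℝ (fun p => fderiv ℝ (ubar ε h₁ h₂) p (EuclideanSpace.single l 1, 0))
                (y, t) (EuclideanSpace.single k 1, 0)| ≤ C / (ε + ‖y‖ ^ 2)) ∧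
          (∀ k : Fin 2,
            |fderiv ℝ (fun p => fderiv ℝ (ubar ε h₁ h₂) p (0, 1))
                (y, t) (EuclideanSpace.single k 1, 0)| ≤
              C * ‖y‖ / (ε + ‖y‖ ^ 2) ^ 2) ∧
          fderiv ℝ (fun p => fderiv ℝ (ubar ε h₁ h₂) p (0, 1)) (y, t) (0, 1) = 0 := by
  classical
  set E := EuclideanSpace ℝ (Fin 2)
  set c : ℝ := min 1 κ₀ with hcdef
  have hc0 : 0 < c := lt_min one_pos hκ
  have hc1 : c ≤ 1 := min_le_left _ _
  have hcκ : c ≤ κ₀ := min_le_right _ _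
  refine ⟨(3 * C₁ + 12 * C₁ ^ 2 / κ₀ + 2 * C₁) / c ^ 2, by positivity, ?_⟩
  intro ε R h₁ h₂ hε hR hs1 hs2 h10 h20 hd10 hd20 hbd hconv y t hy ht1 ht2
  have hB : IsOpen (ball (0 : E) R) := isOpen_ball
  have h0B : (0 : E) ∈ ball (0 : E) R := mem_ball_self hR
  -- first derivatives exist
  have hdh₁ : ∀ x ∈ ball (0 : E) R, HasFDerivAt h₁ (fderiv ℝ h₁ x) x := fun x hx =>
    ((hs1.differentiableOn (by norm_num)).differentiableAt (hB.mem_nhds hx)).hasFDerivAt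
  have hdh₂ : ∀ x ∈ ball (0 : E) R, HasFDerivAt h₂ (fderiv ℝ h₂ x) x := fun x hx =>
    ((hs2.differentiableOn (by norm_num)).differentiableAt (hB.mem_nhds hx)).hasFDerivAt
  -- second derivatives exist
  have hdf₁ : ∀ x ∈ ball (0 : E) R,
      HasFDerivAt (fderiv ℝ h₁) (fderiv ℝ (fderiv ℝ h₁) x) x := fun x hx =>
    (((hs1.fderiv_of_isOpen (m := 1) hB (by norm_num)).differentiableOn
      one_ne_zero).differentiableAt (hB.mem_nhds hx)).hasFDerivAt
  have hdf₂ : ∀ x ∈ ball (0 : E) R,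
      HasFDerivAt (fderiv ℝ h₂) (fderiv ℝ (fderiv ℝ h₂) x) x := fun x hx =>
    (((hs2.fderiv_of_isOpen (m := 1) hB (by norm_num)).differentiableOn
      one_ne_zero).differentiableAt (hB.mem_nhds hx)).hasFDerivAt
  -- second derivative bounds
  have hg₁ : ∀ x ∈ ball (0 : E) R, ‖fderiv ℝ (fderiv ℝ h₁) x‖ ≤ C₁ := fun x hx => by
    have := (hbd x hx).1
    have h1 := abs_nonneg (h₁ x); have h2 := norm_nonneg (fderiv ℝ h₁ x); linarith
  have hg₂ : ∀ x ∈ ball (0 : E) R, ‖fderiv ℝ (fderiv ℝ h₂) x‖ ≤ C₁ := fun x hx => by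
    have := (hbd x hx).2
    have h1 := abs_nonneg (h₂ x); have h2 := norm_nonneg (fderiv ℝ h₂ x); linarith
  -- first derivative bounds via mean value inequality
  have hgrad : ∀ (h : E → ℝ), fderiv ℝ h 0 = 0 →
      (∀ x ∈ ball (0 : E) R, HasFDerivAt (fderiv ℝ h) (fderiv ℝ (fderiv ℝ h) x) x) →
      (∀ x ∈ ball (0 : E) R, ‖fderiv ℝ (fderiv ℝ h) x‖ ≤ C₁) →
      ‖fderiv ℝ h y‖ ≤ C₁ * ‖y‖ := by
    intro h h0 hdf hbnd
    have := Convex.norm_image_sub_le_of_norm_fderiv_le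
      (f := fderiv ℝ h) (s := ball (0 : E) R)
      (fun x hx => (hdf x hx).differentiableAt) hbnd (convex_ball _ _) h0B hy
    simpa [h0] using this
  have hgrad₁ : ‖fderiv ℝ h₁ y‖ ≤ C₁ * ‖y‖ := hgrad h₁ hd10 hdf₁ hg₁
  have hgrad₂ : ‖fderiv ℝ h₂ y‖ ≤ C₁ * ‖y‖ := hgrad h₂ hd20 hdf₂ hg₂
  -- positivity of the denominator
  have hdpos : ∀ x ∈ ball (0 : E) R, (0 : ℝ) < ε + h₁ x - h₂ x := fun x hx => by
    have := hconv x hx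
    have : (0:ℝ) ≤ h₁ x - h₂ x := le_trans (by positivity) this
    linarith
  have hdy : (0 : ℝ) < ε + h₁ y - h₂ y := hdpos y hy
  have hdyne : (ε + h₁ y - h₂ y) ≠ 0 := hdy.ne'
  have hq : (0 : ℝ) < ε + ‖y‖ ^ 2 := by positivity
  have hcq : c * (ε + ‖y‖ ^ 2) ≤ ε + h₁ y - h₂ y := by
    have := hconv y hy
    have hy2 : (0:ℝ) ≤ ‖y‖ ^ 2 := by positivity
    nlinarith
  have hκy : κ₀ * ‖y‖ ^ 2 ≤ ε + h₁ y - h₂ y := by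
    have := hconv y hy; linarith
  have hn0 : (0 : ℝ) ≤ t - h₂ y + ε / 2 := by linarith
  have hnd : t - h₂ y + ε / 2 ≤ ε + h₁ y - h₂ y := by linarith
  -- Step A: formula for the first derivative of ubar in a neighborhood
  have EqA : ∀ (u : E) (s : ℝ),
      (fun p => fderiv ℝ (ubar ε h₁ h₂) p (u, s)) =ᶠ[𝓝 (y, t)]
      (fun p : E × ℝ =>
        (p.2 - h₂ p.1 + ε / 2) * ((ε + h₁ p.1 - h₂ p.1)⁻¹ * (ε + h₁ p.1 - h₂ p.1)⁻¹) *
          (fderiv ℝ h₂ p.1 u - fderiv ℝ h₁ p.1 u)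
        + (ε + h₁ p.1 - h₂ p.1)⁻¹ * (s - fderiv ℝ h₂ p.1 u)) := by
    intro u s
    have hmem : ∀ᶠ p : E × ℝ in 𝓝 (y, t), p.1 ∈ ball (0 : E) R :=
      (continuousAt_fst).eventually_mem (hB.mem_nhds hy)
    filter_upwards [hmem] with p hp
    have hne : (ε + h₁ p.1 - h₂ p.1) ≠ 0 := (hdpos p.1 hp).ne'
    have HD : HasFDerivAt (fun q : E × ℝ => ε + h₁ q.1 - h₂ q.1)
        (((fderiv ℝ h₁ p.1).comp (fst ℝ E ℝ)) - (fderiv ℝ h₂ p.1).comp (fst ℝ E ℝ)) p :=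
      (((hdh₁ p.1 hp).comp p hasFDerivAt_fst).const_add ε).sub
        ((hdh₂ p.1 hp).comp p hasFDerivAt_fst)
    have HI : HasFDerivAt (fun q : E × ℝ => (ε + h₁ q.1 - h₂ q.1)⁻¹)
        ((-((ε + h₁ p.1 - h₂ p.1) ^ 2)⁻¹) •
          (((fderiv ℝ h₁ p.1).comp (fst ℝ E ℝ)) - (fderiv ℝ h₂ p.1).comp (fst ℝ E ℝ))) p :=
      (hasDerivAt_inv hne).comp_hasFDerivAt p HD
    have HN : HasFDerivAt (fun q : E × ℝ => q.2 - h₂ q.1 + ε / 2)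
        ((snd ℝ E ℝ - (fderiv ℝ h₂ p.1).comp (fst ℝ E ℝ))) p :=
      (hasFDerivAt_snd.sub ((hdh₂ p.1 hp).comp p hasFDerivAt_fst)).add_const _
    have HU : HasFDerivAt (ubar ε h₁ h₂) _ p := HN.mul HI
    rw [HU.fderiv]
    simp only [ContinuousLinearMap.add_apply, ContinuousLinearMap.smul_apply,
      ContinuousLinearMap.sub_apply, ContinuousLinearMap.comp_apply, coe_fst', coe_snd',
      smul_eq_mul]
    field_simp
    ring
  -- components of the second derivative at (y,t)
  have HD' : HasFDerivAt (fun q : E × ℝ => ε + h₁ q.1 - h₂ q.1)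
      (((fderiv ℝ h₁ y).comp (fst ℝ E ℝ)) - (fderiv ℝ h₂ y).comp (fst ℝ E ℝ)) (y, t) :=
    (((hdh₁ y hy).comp (y, t) hasFDerivAt_fst).const_add ε).sub
      ((hdh₂ y hy).comp (y, t) hasFDerivAt_fst)
  have HI' : HasFDerivAt (fun q : E × ℝ => (ε + h₁ q.1 - h₂ q.1)⁻¹)
      ((-((ε + h₁ y - h₂ y) ^ 2)⁻¹) •
        (((fderiv ℝ h₁ y).comp (fst ℝ E ℝ)) - (fderiv ℝ h₂ y).comp (fst ℝ E ℝ))) (y, t) :=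
    (hasDerivAt_inv hdyne).comp_hasFDerivAt (y, t) HD'
  have HN' : HasFDerivAt (fun q : E × ℝ => q.2 - h₂ q.1 + ε / 2)
      ((snd ℝ E ℝ - (fderiv ℝ h₂ y).comp (fst ℝ E ℝ))) (y, t) :=
    (hasFDerivAt_snd.sub ((hdh₂ y hy).comp (y, t) hasFDerivAt_fst)).add_const _
  have A1 : ∀ u : E, HasFDerivAt (fun q : E × ℝ => fderiv ℝ h₁ q.1 u)
      (((ContinuousLinearMap.apply ℝ ℝ u).comp (fderiv ℝ (fderiv ℝ h₁) y)).comp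
        (fst ℝ E ℝ)) (y, t) := fun u =>
    ((ContinuousLinearMap.apply ℝ ℝ u).hasFDerivAt.comp y (hdf₁ y hy)).comp (f := Prod.fst) (y, t)
      hasFDerivAt_fst
  have A2 : ∀ u : E, HasFDerivAt (fun q : E × ℝ => fderiv ℝ h₂ q.1 u)
      (((ContinuousLinearMap.apply ℝ ℝ u).comp (fderiv ℝ (fderiv ℝ h₂) y)).comp
        (fst ℝ E ℝ)) (y, t) := fun u =>
    ((ContinuousLinearMap.apply ℝ ℝ u).hasFDerivAt.comp y (hdf₂ y hy)).comp (f := Prod.fst) (y, t)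
      hasFDerivAt_fst
  have hA : ∀ (h : E → ℝ) (u : Fin 2), ‖fderiv ℝ h y‖ ≤ C₁ * ‖y‖ →
      |fderiv ℝ h y (EuclideanSpace.single u 1)| ≤ C₁ * ‖y‖ := by
    intro h u hb
    have h2 := (fderiv ℝ h y).le_opNorm (EuclideanSpace.single u (1:ℝ))
    rw [EuclideanSpace.norm_single, norm_one, mul_one] at h2
    rw [← Real.norm_eq_abs]
    exact h2.trans hb
  have hHb : ∀ (h : E → ℝ) (u v : Fin 2),
      (∀ x ∈ ball (0 : E) R, ‖fderiv ℝ (fderiv ℝ h) x‖ ≤ C₁) →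
      |fderiv ℝ (fderiv ℝ h) y (EuclideanSpace.single u 1) (EuclideanSpace.single v 1)| ≤ C₁ := by
    intro h u v hb
    have h2 := (fderiv ℝ (fderiv ℝ h) y (EuclideanSpace.single u 1)).le_opNorm
      (EuclideanSpace.single v (1:ℝ))
    rw [EuclideanSpace.norm_single, norm_one, mul_one] at h2
    have h3 := (fderiv ℝ (fderiv ℝ h) y).le_opNorm (EuclideanSpace.single u (1:ℝ))
    rw [EuclideanSpace.norm_single, norm_one, mul_one] at h3
    rw [← Real.norm_eq_abs]
    exact h2.trans (h3.trans (hb y hy))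
  refine ⟨?_, ?_, ?_⟩
  · -- tangential-tangential second derivatives
    intro k l
    have HF : HasFDerivAt (fun p : E × ℝ =>
        (p.2 - h₂ p.1 + ε / 2) * ((ε + h₁ p.1 - h₂ p.1)⁻¹ * (ε + h₁ p.1 - h₂ p.1)⁻¹) *
          (fderiv ℝ h₂ p.1 (EuclideanSpace.single l 1) - fderiv ℝ h₁ p.1 (EuclideanSpace.single l 1))
        + (ε + h₁ p.1 - h₂ p.1)⁻¹ * (0 - fderiv ℝ h₂ p.1 (EuclideanSpace.single l 1))) _ (y, t) :=
      ((HN'.mul (HI'.mul HI')).mul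
        ((A2 (EuclideanSpace.single l 1)).sub (A1 (EuclideanSpace.single l 1)))).add
      (HI'.mul ((hasFDerivAt_const (0:ℝ) ((y,t) : E × ℝ)).sub (A2 (EuclideanSpace.single l 1))))
    rw [(EqA (EuclideanSpace.single l 1) 0).fderiv_eq, HF.fderiv]
    simp only [ContinuousLinearMap.add_apply, ContinuousLinearMap.smul_apply,
      ContinuousLinearMap.sub_apply, ContinuousLinearMap.comp_apply, coe_fst', coe_snd',
      smul_eq_mul, ContinuousLinearMap.apply_apply, ContinuousLinearMap.zero_apply, map_zero,
      Pi.mul_apply, Pi.sub_apply, Pi.add_apply]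
    rw [show ((ε + h₁ y - h₂ y) ^ 2)⁻¹ = (ε + h₁ y - h₂ y)⁻¹ * (ε + h₁ y - h₂ y)⁻¹ by
      rw [sq, mul_inv]]
    have ha₁ : |fderiv ℝ h₁ y (EuclideanSpace.single l 1)| ≤ C₁ * ‖y‖ := hA h₁ l hgrad₁
    have ha₂ : |fderiv ℝ h₂ y (EuclideanSpace.single l 1)| ≤ C₁ * ‖y‖ := hA h₂ l hgrad₂
    have hb₁ : |fderiv ℝ h₁ y (EuclideanSpace.single k 1)| ≤ C₁ * ‖y‖ := hA h₁ k hgrad₁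
    have hb₂ : |fderiv ℝ h₂ y (EuclideanSpace.single k 1)| ≤ C₁ * ‖y‖ := hA h₂ k hgrad₂
    have hH₁ : |fderiv ℝ (fderiv ℝ h₁) y (EuclideanSpace.single k 1)
        (EuclideanSpace.single l 1)| ≤ C₁ := hHb h₁ k l hg₁
    have hH₂ : |fderiv ℝ (fderiv ℝ h₂) y (EuclideanSpace.single k 1)
        (EuclideanSpace.single l 1)| ≤ C₁ := hHb h₂ k l hg₂
    set a₁ := fderiv ℝ h₁ y (EuclideanSpace.single l 1) with ha₁d
    set a₂ := fderiv ℝ h₂ y (EuclideanSpace.single l 1) with ha₂d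
    set b₁ := fderiv ℝ h₁ y (EuclideanSpace.single k 1) with hb₁d
    set b₂ := fderiv ℝ h₂ y (EuclideanSpace.single k 1) with hb₂d
    set H₁ := fderiv ℝ (fderiv ℝ h₁) y (EuclideanSpace.single k 1)
        (EuclideanSpace.single l 1) with hH₁d
    set H₂ := fderiv ℝ (fderiv ℝ h₂) y (EuclideanSpace.single k 1)
        (EuclideanSpace.single l 1) with hH₂d
    set di := (ε + h₁ y - h₂ y)⁻¹ with hdid
    set d := ε + h₁ y - h₂ y with hdd
    set n := t - h₂ y + ε / 2 with hnn
    have hdi0 : 0 ≤ di := by rw [hdid]; positivity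
    have hddi : d * di = 1 := mul_inv_cancel₀ hdyne
    have hnabs : |n| ≤ d := by rw [abs_of_nonneg hn0]; exact hnd
    have hdile : di ≤ (c * (ε + ‖y‖ ^ 2))⁻¹ := by
      rw [hdid]
      exact inv_anti₀ (by positivity) hcq
    have hy2di : ‖y‖ ^ 2 * di ≤ κ₀⁻¹ := by
      have h := mul_le_mul_of_nonneg_right hκy hdi0
      rw [hddi] at h
      have h2 : ‖y‖ ^ 2 * di = κ₀⁻¹ * (κ₀ * ‖y‖ ^ 2 * di) := by
        field_simp
      rw [h2]
      calc κ₀⁻¹ * (κ₀ * ‖y‖ ^ 2 * di) ≤ κ₀⁻¹ * 1 :=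
            mul_le_mul_of_nonneg_left h (by positivity)
        _ = κ₀⁻¹ := mul_one _
    -- the five terms
    have hT1 : |n * (di * di) * (H₂ - H₁)| ≤ 2 * C₁ * di := by
      have := mul_abs_le (mul_abs_le hnabs (abs_le_self_of_nonneg (mul_nonneg hdi0 hdi0)))
        (abs_sub_le' hH₂ hH₁)
      calc |n * (di * di) * (H₂ - H₁)| ≤ d * (di * di) * (C₁ + C₁) := this
        _ = 2 * C₁ * di * (d * di) := by ring
        _ = 2 * C₁ * di := by rw [hddi, mul_one]
    have hT2 : |(-(2 * n * (b₁ - b₂))) * (di * (di * di)) * (a₂ - a₁)| ≤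
        8 * C₁ ^ 2 * ‖y‖ ^ 2 * (di * di) := by
      have h1 : |(-(2 * n * (b₁ - b₂)))| ≤ 2 * d * (2 * (C₁ * ‖y‖)) := by
        rw [abs_neg]
        have := mul_abs_le (mul_abs_le (le_of_eq (abs_two)) hnabs) (abs_sub_le' hb₁ hb₂)
        calc |2 * n * (b₁ - b₂)| ≤ 2 * d * (C₁ * ‖y‖ + C₁ * ‖y‖) := this
          _ = 2 * d * (2 * (C₁ * ‖y‖)) := by ring
      have := mul_abs_le (mul_abs_le h1
        (abs_le_self_of_nonneg (mul_nonneg hdi0 (mul_nonneg hdi0 hdi0)))) (abs_sub_le' ha₂ ha₁)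
      calc |(-(2 * n * (b₁ - b₂))) * (di * (di * di)) * (a₂ - a₁)|
          ≤ 2 * d * (2 * (C₁ * ‖y‖)) * (di * (di * di)) * (C₁ * ‖y‖ + C₁ * ‖y‖) := this
        _ = 8 * C₁ ^ 2 * ‖y‖ ^ 2 * (di * di) * (d * di) := by ring
        _ = 8 * C₁ ^ 2 * ‖y‖ ^ 2 * (di * di) := by rw [hddi, mul_one]
    have hT3 : |(-(b₂ * (a₂ - a₁))) * (di * di)| ≤ 2 * C₁ ^ 2 * ‖y‖ ^ 2 * (di * di) := by
      have h1 : |(-(b₂ * (a₂ - a₁)))| ≤ C₁ * ‖y‖ * (C₁ * ‖y‖ + C₁ * ‖y‖) := by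
        rw [abs_neg]; exact mul_abs_le hb₂ (abs_sub_le' ha₂ ha₁)
      have := mul_abs_le h1 (abs_le_self_of_nonneg (mul_nonneg hdi0 hdi0))
      calc |(-(b₂ * (a₂ - a₁))) * (di * di)|
          ≤ C₁ * ‖y‖ * (C₁ * ‖y‖ + C₁ * ‖y‖) * (di * di) := this
        _ = 2 * C₁ ^ 2 * ‖y‖ ^ 2 * (di * di) := by ring
    have hT4 : |a₂ * (b₁ - b₂) * (di * di)| ≤ 2 * C₁ ^ 2 * ‖y‖ ^ 2 * (di * di) := by
      have := mul_abs_le (mul_abs_le ha₂ (abs_sub_le' hb₁ hb₂))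
        (abs_le_self_of_nonneg (mul_nonneg hdi0 hdi0))
      calc |a₂ * (b₁ - b₂) * (di * di)|
          ≤ C₁ * ‖y‖ * (C₁ * ‖y‖ + C₁ * ‖y‖) * (di * di) := this
        _ = 2 * C₁ ^ 2 * ‖y‖ ^ 2 * (di * di) := by ring
    have hT5 : |(-(di * H₂))| ≤ C₁ * di := by
      rw [abs_neg]
      have := mul_abs_le (abs_le_self_of_nonneg hdi0) hH₂
      calc |di * H₂| ≤ di * C₁ := this
        _ = C₁ * di := by ring
    trans |n * (di * di) * (H₂ - H₁) + (-(2 * n * (b₁ - b₂))) * (di * (di * di)) * (a₂ - a₁)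
        + (-(b₂ * (a₂ - a₁))) * (di * di) + a₂ * (b₁ - b₂) * (di * di) + (-(di * H₂))|
    · refine le_of_eq ?_; congr 1 <;> ring
    · have htri : |n * (di * di) * (H₂ - H₁) + (-(2 * n * (b₁ - b₂))) * (di * (di * di)) * (a₂ - a₁)
          + (-(b₂ * (a₂ - a₁))) * (di * di) + a₂ * (b₁ - b₂) * (di * di) + (-(di * H₂))| ≤
          |n * (di * di) * (H₂ - H₁)| + |(-(2 * n * (b₁ - b₂))) * (di * (di * di)) * (a₂ - a₁)|
          + |(-(b₂ * (a₂ - a₁))) * (di * di)| + |a₂ * (b₁ - b₂) * (di * di)| + |(-(di * H₂))| := by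
        refine (abs_add_le _ _).trans (add_le_add ?_ le_rfl)
        refine (abs_add_le _ _).trans (add_le_add ?_ le_rfl)
        refine (abs_add_le _ _).trans (add_le_add ?_ le_rfl)
        exact abs_add_le _ _
      have hsum : |n * (di * di) * (H₂ - H₁)| + |(-(2 * n * (b₁ - b₂))) * (di * (di * di)) * (a₂ - a₁)|
          + |(-(b₂ * (a₂ - a₁))) * (di * di)| + |a₂ * (b₁ - b₂) * (di * di)| + |(-(di * H₂))| ≤
          3 * C₁ * di + 12 * C₁ ^ 2 * ‖y‖ ^ 2 * (di * di) := by linarith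
      refine htri.trans (hsum.trans ?_)
      have hstep : 12 * C₁ ^ 2 * ‖y‖ ^ 2 * (di * di) ≤ 12 * C₁ ^ 2 * κ₀⁻¹ * di := by
        have h := mul_le_mul_of_nonneg_right hy2di hdi0
        calc 12 * C₁ ^ 2 * ‖y‖ ^ 2 * (di * di) = 12 * C₁ ^ 2 * (‖y‖ ^ 2 * di * di) := by ring
          _ ≤ 12 * C₁ ^ 2 * (κ₀⁻¹ * di) := mul_le_mul_of_nonneg_left h (by positivity)
          _ = 12 * C₁ ^ 2 * κ₀⁻¹ * di := by ring
      have hstep2 : 3 * C₁ * di + 12 * C₁ ^ 2 * κ₀⁻¹ * di ≤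
          (3 * C₁ + 12 * C₁ ^ 2 / κ₀) * (c * (ε + ‖y‖ ^ 2))⁻¹ := by
        have hcoef : (0:ℝ) ≤ 3 * C₁ + 12 * C₁ ^ 2 / κ₀ := by positivity
        have := mul_le_mul_of_nonneg_left hdile hcoef
        calc 3 * C₁ * di + 12 * C₁ ^ 2 * κ₀⁻¹ * di = (3 * C₁ + 12 * C₁ ^ 2 / κ₀) * di := by
              rw [div_eq_mul_inv]; ring
          _ ≤ (3 * C₁ + 12 * C₁ ^ 2 / κ₀) * (c * (ε + ‖y‖ ^ 2))⁻¹ := this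
      have hstep3 : (3 * C₁ + 12 * C₁ ^ 2 / κ₀) * (c * (ε + ‖y‖ ^ 2))⁻¹ ≤
          (3 * C₁ + 12 * C₁ ^ 2 / κ₀ + 2 * C₁) / c ^ 2 / (ε + ‖y‖ ^ 2) := by
        rw [← div_eq_mul_inv, div_div, div_le_div_iff₀ (by positivity) (by positivity)]
        have hX : (0:ℝ) ≤ 3 * C₁ + 12 * C₁ ^ 2 / κ₀ := by positivity
        have h1 : (3 * C₁ + 12 * C₁ ^ 2 / κ₀) * c ≤ 3 * C₁ + 12 * C₁ ^ 2 / κ₀ + 2 * C₁ := by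
          have := mul_le_of_le_one_right hX hc1
          linarith
        calc (3 * C₁ + 12 * C₁ ^ 2 / κ₀) * (c ^ 2 * (ε + ‖y‖ ^ 2))
            = ((3 * C₁ + 12 * C₁ ^ 2 / κ₀) * c) * (c * (ε + ‖y‖ ^ 2)) := by ring
          _ ≤ (3 * C₁ + 12 * C₁ ^ 2 / κ₀ + 2 * C₁) * (c * (ε + ‖y‖ ^ 2)) :=
              mul_le_mul_of_nonneg_right h1 (by positivity)
      linarith
  · -- mixed second derivatives
    intro k
    have Eq1 : (fun p => fderiv ℝ (ubar ε h₁ h₂) p ((0 : E), (1 : ℝ))) =ᶠ[𝓝 (y, t)]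
        (fun p : E × ℝ => (ε + h₁ p.1 - h₂ p.1)⁻¹) := by
      refine (EqA 0 1).trans (Eventually.of_forall fun p => ?_)
      simp
    rw [Eq1.fderiv_eq, HI'.fderiv]
    simp only [ContinuousLinearMap.smul_apply, ContinuousLinearMap.sub_apply,
      ContinuousLinearMap.comp_apply, coe_fst', smul_eq_mul]
    rw [show ((ε + h₁ y - h₂ y) ^ 2)⁻¹ = (ε + h₁ y - h₂ y)⁻¹ * (ε + h₁ y - h₂ y)⁻¹ by
      rw [sq, mul_inv]]
    have hb₁ : |fderiv ℝ h₁ y (EuclideanSpace.single k 1)| ≤ C₁ * ‖y‖ := hA h₁ k hgrad₁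
    have hb₂ : |fderiv ℝ h₂ y (EuclideanSpace.single k 1)| ≤ C₁ * ‖y‖ := hA h₂ k hgrad₂
    set b₁ := fderiv ℝ h₁ y (EuclideanSpace.single k 1) with hb₁d
    set b₂ := fderiv ℝ h₂ y (EuclideanSpace.single k 1) with hb₂d
    set di := (ε + h₁ y - h₂ y)⁻¹ with hdid
    have hdi0 : 0 ≤ di := by rw [hdid]; positivity
    have hdile : di ≤ (c * (ε + ‖y‖ ^ 2))⁻¹ := by
      rw [hdid]
      exact inv_anti₀ (by positivity) hcq
    have h1 : |(-(di * di)) * (b₁ - b₂)| ≤ di * di * (C₁ * ‖y‖ + C₁ * ‖y‖) := by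
      have h0 : |(-(di * di))| ≤ di * di := by
        rw [abs_neg]; exact abs_le_self_of_nonneg (mul_nonneg hdi0 hdi0)
      exact mul_abs_le h0 (abs_sub_le' hb₁ hb₂)
    refine (le_trans (by refine le_of_eq ?_; congr 1 <;> ring) h1).trans ?_
    have h2 : di * di * (C₁ * ‖y‖ + C₁ * ‖y‖) ≤
        (c * (ε + ‖y‖ ^ 2))⁻¹ * (c * (ε + ‖y‖ ^ 2))⁻¹ * (C₁ * ‖y‖ + C₁ * ‖y‖) := by
      have := mul_le_mul hdile hdile hdi0 (by positivity)
      exact mul_le_mul_of_nonneg_right this (by positivity)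
    refine h2.trans ?_
    have hqne : (ε + ‖y‖ ^ 2) ≠ 0 := hq.ne'
    have heq : (c * (ε + ‖y‖ ^ 2))⁻¹ * (c * (ε + ‖y‖ ^ 2))⁻¹ * (C₁ * ‖y‖ + C₁ * ‖y‖)
        = (2 * C₁) * ‖y‖ / (c ^ 2 * (ε + ‖y‖ ^ 2) ^ 2) := by
      field_simp
      ring
    have heq2 : (3 * C₁ + 12 * C₁ ^ 2 / κ₀ + 2 * C₁) / c ^ 2 * ‖y‖ / (ε + ‖y‖ ^ 2) ^ 2
        = (3 * C₁ + 12 * C₁ ^ 2 / κ₀ + 2 * C₁) * ‖y‖ / (c ^ 2 * (ε + ‖y‖ ^ 2) ^ 2) := by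
      rw [div_mul_eq_mul_div, div_div]
    rw [heq, heq2]
    have hX : (0:ℝ) < 12 * C₁ ^ 2 / κ₀ := by positivity
    gcongr
    linarith
  · -- vertical-vertical second derivative vanishes
    have Eq1 : (fun p => fderiv ℝ (ubar ε h₁ h₂) p ((0 : E), (1 : ℝ))) =ᶠ[𝓝 (y, t)]
        (fun p : E × ℝ => (ε + h₁ p.1 - h₂ p.1)⁻¹) := by
      refine (EqA 0 1).trans (Eventually.of_forall fun p => ?_)
      simp
    rw [Eq1.fderiv_eq, HI'.fderiv]
    simp
end
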